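/- Characterization of cocycles supported in a flower. Let j ∈ {1,…,d−1}, let j ≤ k ≤ d, let M = (K,C) be a copy of M_{j,k} in a simplicial complex G on [n], and let f be a j-cochain of G whose support is contained in the flower F(K,C). Then: (i) f is a j-cocycle if and only if f = f_{M,r} for some r ∈ R; (ii) if moreover there exist w ∈ K∖C and a ∈ [n]∖K such that (K,C,w,a) is a copy of M̂_{j,k} in G, then f is a j-cocycle that is not a j-coboundary if and only if f = f_{M,r} for some r ∈ R∖{0_R}. -/

import Mathlib

open MeasureTheory Filter Finset Asymptotics
open scoped Classical

noncomputable section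

namespace RSC

/-! ### Simplicial complexes on the vertex set `Fin N` -/

variable {N : ℕ}

/-- A simplicial complex on `[N]`: a downward-closed family of non-empty finite
subsets of the vertex set containing all singletons. -/
def IsComplex (G : Set (Finset (Fin N))) : Prop :=
  (∀ A ∈ G, A.Nonempty) ∧ (∀ v : Fin N, ({v} : Finset (Fin N)) ∈ G) ∧
    ∀ A ∈ G, ∀ B : Finset (Fin N), B ⊆ A → B.Nonempty → B ∈ G

/-- A `d`-dimensional simplicial complex: no `(d+1)`-simplices, i.e. all faces have
at most `d+1` vertices. -/
def IsDComplex (d : ℕ) (G : Set (Finset (Fin N))) : Prop :=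
  IsComplex G ∧ ∀ A ∈ G, A.card ≤ d + 1

/-- `σ` is an ordered simplex of `G` (on `m` vertices, i.e. of dimension `m-1`). -/
def OrdSimp (G : Set (Finset (Fin N))) {m : ℕ} (σ : Fin m → Fin N) : Prop :=
  Function.Injective σ ∧ Finset.image σ Finset.univ ∈ G

/-- An `(m-1)`-dimensional cochain of `G` with coefficients in `R`: a function on
ordered `m`-tuples vanishing off the ordered simplices of `G` and changing sign
under transpositions of two vertices. -/
def IsCochain (G : Set (Finset (Fin N))) (m : ℕ) {R : Type} [AddCommGroup R]
    (f : (Fin m → Fin N) → R) : Prop :=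
  (∀ σ : Fin m → Fin N, ¬ OrdSimp G σ → f σ = 0) ∧
    ∀ (σ : Fin m → Fin N) (a b : Fin m), a ≠ b → f (σ ∘ Equiv.swap a b) = - f σ

/-- The coboundary of a function on ordered `m`-tuples. -/
def delta {R : Type} [AddCommGroup R] {m : ℕ} (g : (Fin m → Fin N) → R) :
    (Fin (m + 1) → Fin N) → R :=
  fun σ => ∑ i : Fin (m + 1), (-1 : ℤ) ^ (i : ℕ) • g (σ ∘ i.succAbove)

/-- An `(m-1)`-dimensional cocycle: a cochain whose coboundary vanishes on all
ordered `(m+1)`-tuples forming simplices of `G`. -/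
def IsCocycle (G : Set (Finset (Fin N))) (m : ℕ) {R : Type} [AddCommGroup R]
    (f : (Fin m → Fin N) → R) : Prop :=
  IsCochain G m f ∧ ∀ σ : Fin (m + 1) → Fin N, OrdSimp G σ → delta f σ = 0

/-- `f` (a function on ordered `(m+1)`-tuples) is an `m`-dimensional coboundary:
on the ordered simplices of `G` it agrees with the coboundary of an
`(m-1)`-dimensional cochain. -/
def IsCobound (G : Set (Finset (Fin N))) (m : ℕ) {R : Type} [AddCommGroup R]
    (f : (Fin (m + 1) → Fin N) → R) : Prop :=
  ∃ g : (Fin m → Fin N) → R, IsCochain G m g ∧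
    ∀ σ : Fin (m + 1) → Fin N, OrdSimp G σ → f σ = delta g σ

/-- The support of a cochain: the unordered simplices on which it does not vanish. -/
def cochainSupport {R : Type} [AddCommGroup R] {m : ℕ} (f : (Fin m → Fin N) → R) :
    Set (Finset (Fin N)) :=
  {A | ∃ σ : Fin m → Fin N, Function.Injective σ ∧ Finset.image σ Finset.univ = A ∧ f σ ≠ 0}

/-- `H^j(G;R) = 0`: every `j`-cocycle is a `j`-coboundary. -/
def HTrivial (G : Set (Finset (Fin N))) (R : Type) [AddCommGroup R] (j : ℕ) : Prop :=
  ∀ f : (Fin (j + 1) → Fin N) → R, IsCocycle G (j + 1) f → IsCobound G j f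

/-- Topological connectedness (equivalently `H^0(G;R) = R`): any two vertices are
joined by a sequence of vertices in which consecutive vertices share a simplex. -/
def TopConnected (G : Set (Finset (Fin N))) : Prop :=
  ∀ u v : Fin N, Relation.ReflTransGen (fun x y => ∃ A ∈ G, x ∈ A ∧ y ∈ A) u v

/-- `R`-cohomological `j`-connectedness: `H^0(G;R) = R` and `H^i(G;R) = 0` for
all `1 ≤ i ≤ j`. -/
def CohomConnected (G : Set (Finset (Fin N))) (R : Type) [AddCommGroup R] (j : ℕ) : Prop :=
  TopConnected G ∧ ∀ i : ℕ, 1 ≤ i → i ≤ j → HTrivial G R i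

/-- `A` is a `j`-shell of `G`: a `(j+2)`-set all of whose `(j+1)`-subsets are
`j`-simplices of `G`. -/
def IsShell (G : Set (Finset (Fin N))) (j : ℕ) (A : Finset (Fin N)) : Prop :=
  A.card = j + 2 ∧ ∀ B ⊆ A, B.card = j + 1 → B ∈ G

/-- The `j`-flower in `K` with centre `C`: the petals `C ∪ {w}`, `w ∈ K \ C`. -/
def flower (K C : Finset (Fin N)) : Set (Finset (Fin N)) :=
  {P | ∃ w ∈ K, w ∉ C ∧ P = insert w C}

/-- `(K, C)` is a copy of `M_{j,k}` in `G`. -/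
def IsCopyM (G : Set (Finset (Fin N))) (j k : ℕ) (K C : Finset (Fin N)) : Prop :=
  K ∈ G ∧ K.card = k + 1 ∧ C ⊆ K ∧ C.card = j ∧
    (∀ σ ∈ G, (∃ w ∈ K, w ∉ C ∧ insert w C ⊆ σ) → σ ⊆ K) ∧
    (k = j → ∀ x ∈ C, ∀ y ∈ K, y ∉ C → x < y)

/-- `(K, C, w, a)` is a copy of `M̂_{j,k}` in `G`. -/
def IsCopyMhat (G : Set (Finset (Fin N))) (j k : ℕ) (K C : Finset (Fin N)) (w a : Fin N) :
    Prop :=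
  IsCopyM G j k K C ∧ w ∈ K ∧ w ∉ C ∧ a ∉ K ∧
    IsShell G j (insert a (insert w C)) ∧ (k = j → ∀ x ∈ K, x ≤ w)

/-- `G + B`: adding the set `B` together with its downward closure to `G`. -/
def addSet (G : Set (Finset (Fin N))) (B : Finset (Fin N)) : Set (Finset (Fin N)) :=
  G ∪ {A | A.Nonempty ∧ A ⊆ B}

/-- `J` is `K`-localised: every simplex of `G` containing `J` is contained in `K`. -/
def KLocalised (G : Set (Finset (Fin N))) (K J : Finset (Fin N)) : Prop :=
  ∀ σ ∈ G, J ⊆ σ → σ ⊆ K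

/-- A `k`-simplex `K` is a local `j`-obstacle: it contains at least `k - j + 1`
many `K`-localised `j`-simplices. -/
def LocalObstacle (G : Set (Finset (Fin N))) (j k : ℕ) (K : Finset (Fin N)) : Prop :=
  K ∈ G ∧ K.card = k + 1 ∧
    k - j + 1 ≤ {J : Finset (Fin N) | J ⊆ K ∧ J.card = j + 1 ∧ J ∈ G ∧ KLocalised G K J}.ncard

/-- The number of copies of `M_{j,k}` in `G`. -/
def countM (j k : ℕ) (G : Set (Finset (Fin N))) : ℕ :=
  Set.ncard {KC : Finset (Fin N) × Finset (Fin N) | IsCopyM G j k KC.1 KC.2}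

/-! ### The random model: independent uniform birth times -/

/-- The sample space: a birth time for each set of vertices. -/
abbrev Omega (n : ℕ) : Type := Finset (Fin n) → ℝ

/-- The probability measure: independent `Uniform[0,1]` birth times. -/
def P (n : ℕ) : Measure (Omega n) :=
  Measure.pi fun _ => volume.restrict (Set.Icc (0 : ℝ) 1)

/-- An event holds with high probability. -/
def WHP (E : (n : ℕ) → Set (Omega n)) : Prop :=
  Tendsto (fun n => P n (E n)) atTop (nhds 1)

/-- The random `d`-complex determined by birth times `ω`: all singletons together
with the downward closure of all sets `K` with `2 ≤ |K| ≤ d+1` whose birth time is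
at most `p (|K| - 1)`; i.e. the downward closure of the non-uniform binomial
random hypergraph `G(n,p)`. -/
def birthComplex (d n : ℕ) (p : ℕ → ℝ) (ω : Omega n) : Set (Finset (Fin n)) :=
  {A | A.Nonempty ∧ (A.card = 1 ∨ ∃ K : Finset (Fin n),
    A ⊆ K ∧ 2 ≤ K.card ∧ K.card ≤ d + 1 ∧ ω K ≤ p (K.card - 1))}

/-- The process `𝒢_τ = 𝒢(n, τ p̄)`: the complex of all simplices with scaled birth
time at most `τ`. -/
def Gproc (d : ℕ) (p : ℕ → ℕ → ℝ) (n : ℕ) (τ : ℝ) (ω : Omega n) : Set (Finset (Fin n)) :=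
  birthComplex d n (fun k => τ * p n k) ω

/-- `G` contains a copy of `M̂_{j,k}` for some `j ≤ k ≤ d`. -/
def ContainsMhat (d j : ℕ) {n : ℕ} (G : Set (Finset (Fin n))) : Prop :=
  ∃ k, j ≤ k ∧ k ≤ d ∧ ∃ K C : Finset (Fin n), ∃ w a : Fin n, IsCopyMhat G j k K C w a

/-- The hitting time `τ_j^*` for the disappearance of the last minimal obstruction. -/
def tstar (d j : ℕ) (p : ℕ → ℕ → ℝ) (n : ℕ) (ω : Omega n) : ℝ :=
  sSup {τ : ℝ | 0 ≤ τ ∧ ContainsMhat d j (Gproc d p n τ ω)}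

/-! ### Directions and their parameters -/

/-- A direction `p̄` together with its parametrisation `ᾱ, β̄, γ̄`
(`p k n` is `p̄_k(n)`, `β n k` is `β̄_k(n)`). -/
structure DirData where
  p : ℕ → ℕ → ℝ
  α : ℕ → ℝ
  β : ℕ → ℕ → ℝ
  γ : ℕ → ℝ

/-- `j`-admissibility of a direction (Definition 2.3). -/
def IsAdmissible (d j : ℕ) (D : DirData) : Prop :=
  (∀ n k, 0 ≤ D.p n k) ∧
  (∀ k, 1 ≤ k → k ≤ d → ∀ n : ℕ,
    D.p n k = (D.α k * Real.log n + D.β n k) / (n : ℝ) ^ ((k : ℝ) - (j : ℝ) + D.γ k)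
      * (Nat.factorial (k - j) : ℝ)) ∧
  (∀ k, 1 ≤ k → k ≤ d → (D.α k = 0 ∨ D.γ k = 0) ∧ 0 ≤ D.α k ∧ 0 ≤ D.γ k) ∧
  (∀ k, 1 ≤ k → k ≤ d → D.α k = 0 →
    (∀ n, D.β n k = 0) ∨ ((∀ n, 0 < D.β n k) ∧ ∀ ε : ℝ, 0 < ε →
      ((fun n => D.β n k) =o[atTop] fun n : ℕ => (n : ℝ) ^ ε) ∧
      ((fun n : ℕ => (n : ℝ) ^ (-ε)) =o[atTop] fun n => D.β n k))) ∧
  (∀ k, 1 ≤ k → k ≤ d → D.γ k = 0 →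
    (fun n => |D.β n k|) =o[atTop] fun n : ℕ => Real.log n) ∧
  (∃ k, j + 1 ≤ k ∧ k ≤ d ∧ 0 < D.α k)

/-- `λ_k`, computed from parameter functions. -/
def lamP (d j : ℕ) (α γ : ℕ → ℝ) (k : ℕ) : ℝ :=
  (j : ℝ) + 1 - γ k - ((k : ℝ) - (j : ℝ) + 1) * ∑ i ∈ Finset.Icc (j + 1) d, α i

/-- `μ_k`, computed from parameter functions. -/
def muP (d j : ℕ) (α : ℕ → ℝ) (β : ℕ → ℕ → ℝ) (γ : ℕ → ℝ) (p : ℕ → ℕ → ℝ)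
    (n k : ℕ) : ℝ :=
  -(((k : ℝ) - (j : ℝ) + 1) * ∑ i ∈ Finset.Icc (j + 1) d, β n i / (n : ℝ) ^ (γ i)) +
    (if 1 < p n k then 0
     else if α k ≠ 0 then Real.log (Real.log n)
     else Real.log (β n k))

/-- `ν_k`, computed from parameter functions. -/
def nuP (j : ℕ) (α : ℕ → ℝ) (k : ℕ) : ℝ :=
  if k = j then -Real.log (Nat.factorial (j + 1) : ℝ)
  else if α k ≠ 0 then
    -Real.log (Nat.factorial j : ℝ) - Real.log ((k : ℝ) - (j : ℝ) + 1) + Real.log (α k)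
  else -Real.log (Nat.factorial j : ℝ) - Real.log ((k : ℝ) - (j : ℝ) + 1)

def DirData.lam (D : DirData) (d j k : ℕ) : ℝ := lamP d j D.α D.γ k

def DirData.mu (D : DirData) (d j : ℕ) (n k : ℕ) : ℝ := muP d j D.α D.β D.γ D.p n k

def DirData.nu (D : DirData) (j k : ℕ) : ℝ := nuP j D.α k

/-- A `j`-critical direction (Definition 2.4). -/
def IsCriticalDirection (d j : ℕ) (D : DirData) : Prop :=
  IsAdmissible d j D ∧
  (∀ k, j ≤ k → k ≤ d → (∃ n, D.p n k ≠ 0) →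
    ∀ᶠ n : ℕ in atTop, D.lam d j k * Real.log n + D.mu d j n k + D.nu j k ≤ 0) ∧
  ∃ k, j ≤ k ∧ k ≤ d ∧
    ∀ᶠ n : ℕ in atTop, D.lam d j k * Real.log n + D.mu d j n k + D.nu j k = 0

/-- `k` is a critical dimension of the `j`-critical direction `D`. -/
def IsCriticalDim (d j : ℕ) (D : DirData) (k : ℕ) : Prop :=
  j ≤ k ∧ k ≤ d ∧ (∃ n, D.p n k ≠ 0) ∧ D.lam d j k = 0 ∧
    (fun n => D.mu d j n k) =O[atTop] fun _ : ℕ => (1 : ℝ)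

/-- The quantity `ℰ = exp(-c(j+1)) ∑_{k ∈ 𝒞} exp(μ̄_k + ν̄_k + c γ̄_k)`. -/
def Ecal (d j : ℕ) (D : DirData) (c : ℝ) (n : ℕ) : ℝ :=
  Real.exp (-(c * ((j : ℝ) + 1))) *
    ∑ k ∈ Finset.Icc j d,
      if IsCriticalDim d j D k then Real.exp (D.mu d j n k + D.nu j k + c * D.γ k) else 0

/-- `q̄ = ∏_{k=j+1}^d (1 - p̄_k)^{binom(n-j-1, k-j)}`. -/
def qbar (d j : ℕ) (D : DirData) (n : ℕ) : ℝ :=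
  ∏ k ∈ Finset.Icc (j + 1) d, (1 - D.p n k) ^ (Nat.choose (n - j - 1) (k - j))

end RSC

end
namespace RSC

/-- The canonical ordering of the petal `C ∪ {w}`: the `j` vertices of `C` in
increasing order, followed by `w`. -/
def canonOrd {N : ℕ} (j : ℕ) (C : Finset (Fin N)) (w : Fin N) : Fin (j + 1) → Fin N :=
  fun i => (C.sort (· ≤ ·)).getD (i : ℕ) w

/-- `f = f_{M,r}` for the copy `M = (K, C)` of `M_{j,k}`: the `j`-cochain taking the
value `r` on every petal of the flower `F(K,C)` in its canonical ordering and
vanishing on every `j`-simplex not in `F(K,C)`. -/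
def IsFMr {N : ℕ} (G : Set (Finset (Fin N))) (j : ℕ) (K C : Finset (Fin N))
    {R : Type} [AddCommGroup R] (f : (Fin (j + 1) → Fin N) → R) (r : R) : Prop :=
  IsCochain G (j + 1) f ∧
  (∀ σ : Fin (j + 1) → Fin N, Finset.image σ Finset.univ ∉ flower K C → f σ = 0) ∧
  ∀ w ∈ K, w ∉ C → f (canonOrd j C w) = r


section Aux

variable {N : ℕ}



lemma val_succAbove {m : ℕ} (p : Fin (m + 1)) (x : Fin m) :
    ((p.succAbove x : Fin (m+1)) : ℕ) = if (x : ℕ) < (p : ℕ) then (x : ℕ) else (x : ℕ) + 1 := by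
  rw [Fin.succAbove]
  split_ifs with h1 h2 h2 <;>
    simp_all [Fin.lt_def, Fin.coe_castSucc, Fin.val_succ] <;> omega

lemma succAbove_comp {m : ℕ} (i : Fin (m + 2)) (l : Fin (m + 1)) (h : (l : ℕ) < (i : ℕ)) :
    i.succAbove ∘ l.succAbove =
      (l.castSucc).succAbove ∘ (⟨(i : ℕ) - 1, by omega⟩ : Fin (m + 1)).succAbove := by
  funext x
  simp only [Function.comp_apply]
  apply Fin.ext
  have hi : (i : ℕ) ≤ m + 1 := by omega
  simp only [val_succAbove, Fin.coe_castSucc]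
  split_ifs <;> omega

lemma delta_delta {R : Type} [AddCommGroup R] {m : ℕ} (g : (Fin m → Fin N) → R)
    (σ : Fin (m + 2) → Fin N) : delta (delta g) σ = 0 := by
  classical
  unfold delta
  simp only [Finset.smul_sum, smul_smul, ← pow_add]
  rw [← Finset.sum_product']
  have helper : ∀ (i : Fin (m + 2)) (l : Fin (m + 1)), (l : ℕ) < (i : ℕ) →
      (-1 : ℤ) ^ ((i : ℕ) + (l : ℕ)) • g ((σ ∘ i.succAbove) ∘ l.succAbove) =
      - ((-1 : ℤ) ^ (((l.castSucc : Fin (m+2)) : ℕ) +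
            ((⟨(i : ℕ) - 1, by omega⟩ : Fin (m + 1)) : ℕ)) •
          g ((σ ∘ (l.castSucc).succAbove) ∘
            (⟨(i : ℕ) - 1, by omega⟩ : Fin (m + 1)).succAbove)) := by
    intro i l h
    have key := succAbove_comp i l h
    have hcomp : (σ ∘ i.succAbove) ∘ l.succAbove =
        (σ ∘ (l.castSucc).succAbove) ∘ (⟨(i : ℕ) - 1, by omega⟩ : Fin (m+1)).succAbove := by
      rw [Function.comp_assoc, key, Function.comp_assoc]
    rw [hcomp, ← neg_smul]
    congr 1
    simp only [Fin.coe_castSucc]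
    have he : (l : ℕ) + ((i : ℕ) - 1) + 1 = (i : ℕ) + (l : ℕ) := by omega
    rw [← he, pow_succ]
    ring
  refine Finset.sum_ninvolution
    (fun p => if h : (p.2 : ℕ) < (p.1 : ℕ) then
        (p.2.castSucc, (⟨(p.1 : ℕ) - 1, by omega⟩ : Fin (m + 1)))
      else ((p.2).succ, (⟨(p.1 : ℕ), by omega⟩ : Fin (m + 1))))
    (fun p => ?_) (fun p _ => ?_)
    (fun p => Finset.mem_product.2 ⟨mem_univ _, mem_univ _⟩)
    (fun p => ?_)
  · obtain ⟨i, l⟩ := p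
    dsimp only
    by_cases h : (l : ℕ) < (i : ℕ)
    · rw [dif_pos h, helper i l h]
      exact neg_add_cancel _
    · rw [dif_neg h]
      push_neg at h
      have h2 : ((⟨(i : ℕ), by omega⟩ : Fin (m + 1)) : ℕ) < ((l.succ : Fin (m+2)) : ℕ) := by
        simp only [Fin.val_succ]; omega
      have := helper l.succ (⟨(i : ℕ), by omega⟩ : Fin (m + 1)) h2
      have e1 : ((⟨(i : ℕ), by omega⟩ : Fin (m + 1)).castSucc : Fin (m + 2)) = i := by
        apply Fin.ext; simp
      have e2 : (⟨((l.succ : Fin (m+2)) : ℕ) - 1, by omega⟩ : Fin (m + 1)) = l := by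
        apply Fin.ext; simp
      rw [e1, e2] at this
      rw [this]
      exact add_neg_cancel _
  · -- no fixed points
    obtain ⟨i, l⟩ := p
    intro hc
    dsimp only at hc
    by_cases h : (l : ℕ) < (i : ℕ)
    · rw [dif_pos h] at hc
      have := congrArg (fun q => ((Prod.fst q : Fin (m+2)) : ℕ)) hc
      simp only [Fin.coe_castSucc] at this
      omega
    · rw [dif_neg h] at hc
      push_neg at h
      have := congrArg (fun q => ((Prod.fst q : Fin (m+2)) : ℕ)) hc
      simp only [Fin.val_succ] at this
      omega
  · -- involution
    obtain ⟨i, l⟩ := p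
    dsimp only
    by_cases h : (l : ℕ) < (i : ℕ)
    · rw [dif_pos h]
      have h2 : ¬ (((⟨(i : ℕ) - 1, by omega⟩ : Fin (m + 1)) : ℕ) <
          ((l.castSucc : Fin (m+2)) : ℕ)) := by
        simp only [Fin.coe_castSucc]; omega
      rw [dif_neg h2]
      refine Prod.ext ?_ ?_ <;> apply Fin.ext <;> simp <;> omega
    · rw [dif_neg h]
      push_neg at h
      have h2 : ((⟨(i : ℕ), by omega⟩ : Fin (m + 1)) : ℕ) < ((l.succ : Fin (m+2)) : ℕ) := by
        simp only [Fin.val_succ]; omega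
      rw [dif_pos h2]
      refine Prod.ext ?_ ?_ <;> apply Fin.ext <;> simp



lemma swap_castSucc_comp {m : ℕ} (i : Fin m) :
    ⇑(Equiv.swap (Fin.castSucc i) (Fin.succ i)) ∘ (Fin.castSucc i).succAbove
      = (Fin.succ i).succAbove := by
  funext x
  simp only [Function.comp_apply]
  rcases lt_trichotomy (x : ℕ) (i : ℕ) with h | h | h
  · rw [Fin.succAbove_of_castSucc_lt _ _ (by simp only [Fin.lt_def, Fin.coe_castSucc, Fin.val_succ]; omega),
      Fin.succAbove_of_castSucc_lt _ _ (by simp only [Fin.lt_def, Fin.coe_castSucc, Fin.val_succ]; omega),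
      Equiv.swap_apply_of_ne_of_ne (x := Fin.castSucc x) (by simp only [ne_eq, Fin.ext_iff, Fin.coe_castSucc, Fin.val_succ]; omega) (by simp only [ne_eq, Fin.ext_iff, Fin.coe_castSucc, Fin.val_succ]; omega)]
  · have hx : x = i := Fin.ext h
    subst hx
    rw [Fin.succAbove_of_le_castSucc _ _ (by simp only [Fin.le_def, Fin.coe_castSucc, Fin.val_succ]; omega),
      Equiv.swap_apply_right,
      Fin.succAbove_of_castSucc_lt _ _ (by simp only [Fin.lt_def, Fin.coe_castSucc, Fin.val_succ]; omega)]
  · rw [Fin.succAbove_of_le_castSucc _ _ (by simp only [Fin.le_def, Fin.coe_castSucc, Fin.val_succ]; omega),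
      Fin.succAbove_of_le_castSucc _ _ (by simp only [Fin.le_def, Fin.coe_castSucc, Fin.val_succ]; omega),
      Equiv.swap_apply_of_ne_of_ne (x := Fin.succ x) (by simp only [ne_eq, Fin.ext_iff, Fin.coe_castSucc, Fin.val_succ]; omega) (by simp only [ne_eq, Fin.ext_iff, Fin.coe_castSucc, Fin.val_succ]; omega)]

lemma swap_succ_comp {m : ℕ} (i : Fin m) :
    ⇑(Equiv.swap (Fin.castSucc i) (Fin.succ i)) ∘ (Fin.succ i).succAbove
      = (Fin.castSucc i).succAbove := by
  funext x
  have h := congrFun (swap_castSucc_comp i) x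
  simp only [Function.comp_apply] at h ⊢
  rw [← h, Equiv.swap_apply_self]

lemma swap_comp_succAbove_ne {m : ℕ} (a b l : Fin (m + 1)) (ha : a ≠ l) (hb : b ≠ l)
    (hab : a ≠ b) :
    ∃ a' b' : Fin m, a' ≠ b' ∧
      ⇑(Equiv.swap a b) ∘ l.succAbove = l.succAbove ∘ ⇑(Equiv.swap a' b') := by
  obtain ⟨a', ha'⟩ := Fin.exists_succAbove_eq ha
  obtain ⟨b', hb'⟩ := Fin.exists_succAbove_eq hb
  refine ⟨a', b', ?_, ?_⟩
  · rintro rfl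
    exact hab (ha'.symm.trans hb')
  · funext x
    simp only [Function.comp_apply]
    rcases eq_or_ne x a' with rfl | hxa
    · rw [ha', Equiv.swap_apply_left, Equiv.swap_apply_left, hb']
    rcases eq_or_ne x b' with rfl | hxb
    · rw [hb', Equiv.swap_apply_right, Equiv.swap_apply_right, ha']
    · rw [Equiv.swap_apply_of_ne_of_ne hxa hxb,
        Equiv.swap_apply_of_ne_of_ne
          (fun hc => hxa (Fin.succAbove_right_injective (hc.trans ha'.symm)))
          (fun hc => hxb (Fin.succAbove_right_injective (hc.trans hb'.symm)))]

lemma alt_comp_perm {R : Type} [AddCommGroup R] {m : ℕ} (f : (Fin m → Fin N) → R)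
    (hf : ∀ (σ : Fin m → Fin N) (a b : Fin m), a ≠ b → f (σ ∘ Equiv.swap a b) = - f σ)
    (σ : Fin m → Fin N) (π : Equiv.Perm (Fin m)) :
    f (σ ∘ π) = (Equiv.Perm.sign π : ℤ) • f σ := by
  refine Equiv.Perm.swap_induction_on'
    (motive := fun π => f (σ ∘ ⇑π) = ((Equiv.Perm.sign π : ℤˣ) : ℤ) • f σ) π ?_ ?_
  · simp
  · intro π x y hxy hP
    have hc : σ ∘ ⇑(π * Equiv.swap x y) = (σ ∘ ⇑π) ∘ ⇑(Equiv.swap x y) := rfl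
    rw [hc, hf _ _ _ hxy, hP, map_mul, Equiv.Perm.sign_swap hxy]
    simp [neg_smul]

lemma delta_comp_swap_adj {R : Type} [AddCommGroup R] {m : ℕ} (f : (Fin m → Fin N) → R)
    (hf : ∀ (σ : Fin m → Fin N) (a b : Fin m), a ≠ b → f (σ ∘ Equiv.swap a b) = - f σ)
    (σ : Fin (m + 1) → Fin N) (i : Fin m) :
    delta f (σ ∘ Equiv.swap (Fin.castSucc i) (Fin.succ i)) = - delta f σ := by
  set s := Equiv.swap (Fin.castSucc i) (Fin.succ i) with hs
  have key : ∀ l : Fin (m + 1),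
      (-1 : ℤ) ^ (l : ℕ) • f ((σ ∘ ⇑s) ∘ l.succAbove)
        = - ((-1 : ℤ) ^ ((s l : Fin (m + 1)) : ℕ) • f (σ ∘ (s l).succAbove)) := by
    intro l
    rcases eq_or_ne l (Fin.castSucc i) with rfl | h1
    · rw [hs, Equiv.swap_apply_left, Function.comp_assoc, swap_castSucc_comp, ← neg_smul]
      congr 1
      rw [Fin.val_succ, Fin.coe_castSucc, pow_succ]
      ring
    rcases eq_or_ne l (Fin.succ i) with rfl | h2
    · rw [hs, Equiv.swap_apply_right, Function.comp_assoc, swap_succ_comp, ← neg_smul]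
      congr 1
      rw [Fin.val_succ, Fin.coe_castSucc, pow_succ]
      ring
    · rw [hs, Equiv.swap_apply_of_ne_of_ne h1 h2]
      obtain ⟨a', b', hab, hcomm⟩ := swap_comp_succAbove_ne (Fin.castSucc i) (Fin.succ i) l
        (Ne.symm h1) (Ne.symm h2) (by simp only [ne_eq, Fin.ext_iff, Fin.coe_castSucc, Fin.val_succ]; omega)
      rw [Function.comp_assoc, hs] at *
      rw [hcomm, ← Function.comp_assoc, hf _ _ _ hab, smul_neg]
  unfold delta
  calc ∑ l : Fin (m + 1), (-1 : ℤ) ^ (l : ℕ) • f ((σ ∘ ⇑s) ∘ l.succAbove)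
      = ∑ l : Fin (m + 1), - ((-1 : ℤ) ^ ((s l : Fin (m + 1)) : ℕ) • f (σ ∘ (s l).succAbove)) :=
        Finset.sum_congr rfl (fun l _ => key l)
    _ = - ∑ l : Fin (m + 1), (-1 : ℤ) ^ ((s l : Fin (m + 1)) : ℕ) • f (σ ∘ (s l).succAbove) := by
        rw [Finset.sum_neg_distrib]
    _ = - ∑ l : Fin (m + 1), (-1 : ℤ) ^ (l : ℕ) • f (σ ∘ l.succAbove) := by
        rw [Equiv.sum_comp s (fun l => (-1 : ℤ) ^ (l : ℕ) • f (σ ∘ l.succAbove))]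

lemma delta_comp_perm {R : Type} [AddCommGroup R] {m : ℕ} (f : (Fin m → Fin N) → R)
    (hf : ∀ (σ : Fin m → Fin N) (a b : Fin m), a ≠ b → f (σ ∘ Equiv.swap a b) = - f σ)
    (σ : Fin (m + 1) → Fin N) (π : Equiv.Perm (Fin (m + 1))) :
    delta f (σ ∘ π) = (Equiv.Perm.sign π : ℤ) • delta f σ := by
  have hπ : π ∈ Submonoid.closure (Set.range fun i : Fin m ↦ Equiv.swap i.castSucc i.succ) := by
    rw [Equiv.Perm.mclosure_swap_castSucc_succ m]
    trivial
  revert σ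
  induction hπ using Submonoid.closure_induction with
  | mem x hx =>
    obtain ⟨i, rfl⟩ := hx
    intro σ
    rw [delta_comp_swap_adj f hf σ i, Equiv.Perm.sign_swap (by simp only [ne_eq, Fin.ext_iff, Fin.coe_castSucc, Fin.val_succ]; omega)]
    simp
  | one => intro σ; simp
  | mul x y hx hy ihx ihy =>
    intro σ
    have hc : σ ∘ ⇑(x * y) = (σ ∘ ⇑x) ∘ ⇑y := rfl
    rw [hc, ihy, ihx, map_mul, smul_smul]
    congr 1
    push_cast
    ring


/-! ### Combinatorial lemmas about canonical orderings -/

/-- The canonical ordering of `C ∪ {w, w'}`: sorted `C`, then `w`, then `w'`. -/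
def ord2 (j : ℕ) (C : Finset (Fin N)) (w w' : Fin N) : Fin (j + 2) → Fin N :=
  fun i => if (i : ℕ) ≤ j then (C.sort (· ≤ ·)).getD (i : ℕ) w else w'

section Comb

variable {j : ℕ} {C : Finset (Fin N)} {w w' : Fin N}

lemma canon_mem (hC : C.card = j) (i : Fin (j + 1)) (h : (i : ℕ) < j) :
    canonOrd j C w i ∈ C := by
  have hl : (i : ℕ) < (C.sort (· ≤ ·)).length := by rw [Finset.length_sort, hC]; exact h
  rw [canonOrd, List.getD_eq_getElem _ _ hl]
  exact Finset.mem_sort (· ≤ ·) |>.1 (List.getElem_mem hl)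

lemma canon_last (hC : C.card = j) (i : Fin (j + 1)) (h : j ≤ (i : ℕ)) :
    canonOrd j C w i = w := by
  rw [canonOrd, List.getD_eq_default]
  rw [Finset.length_sort, hC]
  exact h

lemma canon_inj (hC : C.card = j) (hw : w ∉ C) : Function.Injective (canonOrd j C w) := by
  intro x y hxy
  have hlen : (C.sort (· ≤ ·)).length = j := by rw [Finset.length_sort, hC]
  rcases lt_or_ge (x : ℕ) j with hx | hx <;> rcases lt_or_ge (y : ℕ) j with hy | hy
  · have h1 : canonOrd j C w x = (C.sort (· ≤ ·))[(x : ℕ)]'(by omega) :=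
      List.getD_eq_getElem _ _ (by omega)
    have h2 : canonOrd j C w y = (C.sort (· ≤ ·))[(y : ℕ)]'(by omega) :=
      List.getD_eq_getElem _ _ (by omega)
    rw [h1, h2] at hxy
    exact Fin.ext ((List.Nodup.getElem_inj_iff (C.sort_nodup (· ≤ ·))).1 hxy)
  · have h2 : canonOrd j C w x ∈ C := canon_mem hC x hx
    rw [hxy, canon_last hC y hy] at h2
    exact absurd h2 hw
  · have h2 : canonOrd j C w y ∈ C := canon_mem hC y hy
    rw [← hxy, canon_last hC x hx] at h2
    exact absurd h2 hw
  · apply Fin.ext; omega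
  
lemma canon_image (hC : C.card = j) :
    Finset.image (canonOrd j C w) Finset.univ = insert w C := by
  have hlen : (C.sort (· ≤ ·)).length = j := by rw [Finset.length_sort, hC]
  ext a
  simp only [Finset.mem_image, Finset.mem_insert, Finset.mem_univ, true_and]
  constructor
  · rintro ⟨i, rfl⟩
    rcases lt_or_ge (i : ℕ) j with h | h
    · exact Or.inr (canon_mem hC i h)
    · exact Or.inl (canon_last hC i h)
  · rintro (rfl | ha)
    · exact ⟨⟨j, by omega⟩, canon_last hC _ (le_refl j)⟩
    · obtain ⟨n, hn, hna⟩ := List.mem_iff_getElem.1 ((Finset.mem_sort (· ≤ ·)).2 ha)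
      refine ⟨⟨n, by omega⟩, ?_⟩
      rw [canonOrd, List.getD_eq_getElem _ _ (by exact hn)]
      exact hna

lemma ord2_castSucc (i : Fin (j + 1)) : ord2 j C w w' (Fin.castSucc i) = canonOrd j C w i := by
  rw [ord2, if_pos (by simp only [Fin.coe_castSucc]; omega)]
  rfl

lemma ord2_face_last : ord2 j C w w' ∘ (Fin.last (j + 1)).succAbove = canonOrd j C w := by
  funext x
  rw [Function.comp_apply, Fin.succAbove_last, ord2_castSucc]

lemma ord2_face_j (hC : C.card = j) :
    ord2 j C w w' ∘ (⟨j, by omega⟩ : Fin (j + 2)).succAbove = canonOrd j C w' := by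
  have hlen : (C.sort (· ≤ ·)).length = j := by rw [Finset.length_sort, hC]
  funext x
  rw [Function.comp_apply]
  rcases lt_or_ge (x : ℕ) j with h | h
  · rw [Fin.succAbove_of_castSucc_lt _ _ (by simp only [Fin.lt_def, Fin.coe_castSucc]; omega),
      ord2_castSucc, canonOrd, canonOrd, List.getD_eq_getElem _ _ (by omega),
      List.getD_eq_getElem _ _ (by omega)]
  · rw [Fin.succAbove_of_le_castSucc _ _ (by simp only [Fin.le_def, Fin.coe_castSucc]; omega),
      ord2, if_neg (by simp only [Fin.val_succ]; omega), canon_last hC x h]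

lemma ord2_inj (hC : C.card = j) (hw : w ∉ C) (hw' : w' ∉ C) (hww' : w ≠ w') :
    Function.Injective (ord2 j C w w') := by
  intro x y hxy
  rcases lt_or_ge (x : ℕ) (j + 1) with hx | hx <;> rcases lt_or_ge (y : ℕ) (j + 1) with hy | hy
  · have ex : x = Fin.castSucc ⟨(x : ℕ), hx⟩ := by apply Fin.ext; simp
    have ey : y = Fin.castSucc ⟨(y : ℕ), hy⟩ := by apply Fin.ext; simp
    rw [ex, ey, ord2_castSucc, ord2_castSucc] at hxy
    rw [ex, ey, canon_inj hC hw hxy]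
  · -- y = last, value w'
    exfalso
    have hyv : ord2 j C w w' y = w' := by rw [ord2, if_neg (by omega)]
    have ex : x = Fin.castSucc ⟨(x : ℕ), hx⟩ := by apply Fin.ext; simp
    rw [ex, ord2_castSucc, hyv] at hxy
    rcases lt_or_ge ((⟨(x : ℕ), hx⟩ : Fin (j + 1)) : ℕ) j with h | h
    · exact hw' (hxy ▸ canon_mem hC _ h)
    · exact hww' ((canon_last hC _ h).symm.trans hxy)
  · exfalso
    have hxv : ord2 j C w w' x = w' := by rw [ord2, if_neg (by omega)]
    have ey : y = Fin.castSucc ⟨(y : ℕ), hy⟩ := by apply Fin.ext; simp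
    rw [ey, ord2_castSucc, hxv] at hxy
    rcases lt_or_ge ((⟨(y : ℕ), hy⟩ : Fin (j + 1)) : ℕ) j with h | h
    · exact hw' (hxy.symm ▸ canon_mem hC _ h)
    · exact hww' ((canon_last hC _ h).symm.trans hxy.symm)
  · apply Fin.ext; omega

lemma ord2_image (hC : C.card = j) :
    Finset.image (ord2 j C w w') Finset.univ = insert w' (insert w C) := by
  ext a
  simp only [Finset.mem_image, Finset.mem_insert, Finset.mem_univ, true_and]
  constructor
  · rintro ⟨i, rfl⟩
    rcases lt_or_ge (i : ℕ) (j + 1) with h | h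
    · have ex : i = Fin.castSucc ⟨(i : ℕ), h⟩ := by apply Fin.ext; simp
      rw [ex, ord2_castSucc]
      rcases lt_or_ge ((⟨(i : ℕ), h⟩ : Fin (j + 1)) : ℕ) j with h2 | h2
      · exact Or.inr (Or.inr (canon_mem hC _ h2))
      · exact Or.inr (Or.inl (canon_last hC _ h2))
    · exact Or.inl (by rw [ord2, if_neg (by omega)])
  · rintro (rfl | rfl | ha)
    · exact ⟨Fin.last (j + 1), by rw [ord2, if_neg (by simp [Fin.last])]⟩
    · refine ⟨Fin.castSucc ⟨j, by omega⟩, ?_⟩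
      rw [ord2_castSucc, canon_last hC _ (le_refl j)]
    · obtain ⟨n, hn, hna⟩ := List.mem_iff_getElem.1 ((Finset.mem_sort (· ≤ ·)).2 ha)
      have hlen : (C.sort (· ≤ ·)).length = j := by rw [Finset.length_sort, hC]
      refine ⟨Fin.castSucc ⟨n, by omega⟩, ?_⟩
      rw [ord2_castSucc, canonOrd, List.getD_eq_getElem _ _ (by exact hn)]
      exact hna

lemma image_comp_subset {m : ℕ} (σ : Fin (m + 1) → Fin N) (i : Fin (m + 1)) :
    Finset.image (σ ∘ i.succAbove) Finset.univ ⊆ Finset.image σ Finset.univ := by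
  intro a ha
  obtain ⟨x, -, hx⟩ := Finset.mem_image.1 ha
  exact Finset.mem_image.2 ⟨i.succAbove x, Finset.mem_univ _, hx⟩

lemma self_not_mem_face {m : ℕ} (σ : Fin (m + 1) → Fin N) (hσ : Function.Injective σ)
    (i : Fin (m + 1)) : σ i ∉ Finset.image (σ ∘ i.succAbove) Finset.univ := by
  intro h
  obtain ⟨x, -, hx⟩ := Finset.mem_image.1 h
  exact Fin.succAbove_ne i x (hσ hx)

lemma exists_perm_comp {m : ℕ} (u v : Fin m → Fin N) (hu : Function.Injective u)
    (hv : Function.Injective v) (h : Finset.image u Finset.univ = Finset.image v Finset.univ) :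
    ∃ π : Equiv.Perm (Fin m), u = v ∘ π := by
  have hx : ∀ x, u x ∈ Finset.image v Finset.univ := by
    intro x
    rw [← h]
    exact Finset.mem_image_of_mem u (Finset.mem_univ x)
  choose y hy1 hy2 using fun x => Finset.mem_image.1 (hx x)
  have hyinj : Function.Injective y := by
    intro x1 x2 h12
    apply hu
    rw [← hy2 x1, ← hy2 x2, h12]
  refine ⟨Equiv.ofBijective y ((Finite.injective_iff_bijective).1 hyinj), ?_⟩
  funext x
  exact (hy2 x).symm

lemma sign_sum_zero {R : Type} [AddCommGroup R] (j : ℕ) (x : R) :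
    (-1 : ℤ) ^ j • x + (-1 : ℤ) ^ (j + 1) • x = 0 := by
  rw [pow_succ, mul_neg_one, neg_smul, add_neg_cancel]

lemma eq_of_sign_sum {R : Type} [AddCommGroup R] {j : ℕ} {x y : R}
    (h : (-1 : ℤ) ^ j • x + (-1 : ℤ) ^ (j + 1) • y = 0) : x = y := by
  have h2 : (-1 : ℤ) ^ j • (x - y) = 0 := by
    rw [smul_sub, sub_eq_zero]
    rw [pow_succ, mul_neg_one, neg_smul] at h
    exact (add_eq_zero_iff_eq_neg.1 h).trans (neg_neg _)
  rcases Nat.even_or_odd j with hp | hp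
  · rw [hp.neg_one_pow, one_smul, sub_eq_zero] at h2
    exact h2
  · rw [hp.neg_one_pow, neg_smul, one_smul, neg_eq_zero, sub_eq_zero] at h2
    exact h2

lemma zero_of_sign_smul {R : Type} [AddCommGroup R] {j : ℕ} {x : R}
    (h : (-1 : ℤ) ^ j • x = 0) : x = 0 := by
  rcases Nat.even_or_odd j with hp | hp
  · rwa [hp.neg_one_pow, one_smul] at h
  · rwa [hp.neg_one_pow, neg_smul, one_smul, neg_eq_zero] at h

/-- Vanishing of a cochain whose support lies in the flower. -/
lemma van_of_supp {m : ℕ} {R : Type} [AddCommGroup R] {G : Set (Finset (Fin N))}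
    {K C : Finset (Fin N)} {f : (Fin m → Fin N) → R} (hf : IsCochain G m f)
    (hsupp : cochainSupport f ⊆ flower K C) :
    ∀ σ : Fin m → Fin N, Finset.image σ Finset.univ ∉ flower K C → f σ = 0 := by
  intro σ h
  by_contra hne
  have hOS : OrdSimp G σ := by
    by_contra h'
    exact hne (hf.1 σ h')
  exact h (hsupp ⟨σ, hOS.1, rfl, hne⟩)

/-- Computation of the coboundary on the canonical ordering of `C ∪ {w, w'}` for a
cochain vanishing off the flower. -/
lemma delta_ord2 {R : Type} [AddCommGroup R] (j : ℕ) (K C : Finset (Fin N)) (w w' : Fin N)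
    (hC : C.card = j) (hw : w ∉ C) (hw' : w' ∉ C) (hww' : w ≠ w')
    (f : (Fin (j + 1) → Fin N) → R)
    (hvan : ∀ σ : Fin (j + 1) → Fin N, Finset.image σ Finset.univ ∉ flower K C → f σ = 0) :
    delta f (ord2 j C w w') =
      (-1 : ℤ) ^ j • f (canonOrd j C w') + (-1 : ℤ) ^ (j + 1) • f (canonOrd j C w) := by
  have hinj := ord2_inj hC hw hw' hww'
  unfold delta
  rw [Finset.sum_eq_add_of_mem (⟨j, by omega⟩ : Fin (j + 2)) (Fin.last (j + 1))
    (Finset.mem_univ _) (Finset.mem_univ _)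
    (by simp only [ne_eq, Fin.ext_iff, Fin.last]; omega) ?_]
  · have e1 : ((⟨j, by omega⟩ : Fin (j + 2)) : ℕ) = j := rfl
    have e2 : ((Fin.last (j + 1) : Fin (j + 2)) : ℕ) = j + 1 := rfl
    rw [e1, e2, ord2_face_j hC, ord2_face_last]
  · intro c _ hc
    have hcj : (c : ℕ) < j := by
      have h1 : (c : ℕ) ≠ j := fun h => hc.1 (Fin.ext h)
      have h2 : (c : ℕ) ≠ j + 1 := fun h => hc.2 (Fin.ext h)
      omega
    have hmem : ord2 j C w w' c ∈ C := by
      have ex : c = Fin.castSucc ⟨(c : ℕ), by omega⟩ := by apply Fin.ext; simp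
      rw [ex, ord2_castSucc]
      exact canon_mem hC _ hcj
    have hnot : Finset.image (ord2 j C w w' ∘ c.succAbove) Finset.univ ∉ flower K C := by
      rintro ⟨u, huK, huC, hP⟩
      apply self_not_mem_face (ord2 j C w w') hinj c
      rw [hP]
      exact Finset.mem_insert_of_mem hmem
    rw [hvan _ hnot, smul_zero]

end Comb


end Aux

/-- **Characterisation of cocycles supported in a flower** (Proposition 4.10). Let
`M = (K,C)` be a copy of `M_{j,k}` and `f` a `j`-cochain with support contained in
the flower `F(K,C)`. Then (i) `f` is a `j`-cocycle iff `f = f_{M,r}` for some `r ∈ R`;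
(ii) if moreover `(K,C,w,a)` is a copy of `M̂_{j,k}` for some `w, a`, then `f` is a
`j`-cocycle that is not a `j`-coboundary iff `f = f_{M,r}` for some `r ≠ 0`. -/
theorem cocycles_supported_in_flower
    (d j N : ℕ) (hd : 2 ≤ d) (hj : 1 ≤ j) (hjd : j ≤ d - 1)
    (k : ℕ) (hk1 : j ≤ k) (hk2 : k ≤ d)
    (R : Type) [AddCommGroup R] [Nontrivial R]
    (G : Set (Finset (Fin N))) (hG : IsComplex G)
    (K C : Finset (Fin N)) (hM : IsCopyM G j k K C)
    (f : (Fin (j + 1) → Fin N) → R) (hf : IsCochain G (j + 1) f)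
    (hsupp : cochainSupport f ⊆ flower K C) :
    (IsCocycle G (j + 1) f ↔ ∃ r : R, IsFMr G j K C f r) ∧
    ((∃ w a, IsCopyMhat G j k K C w a) →
      ((IsCocycle G (j + 1) f ∧ ¬ IsCobound G j f) ↔
        ∃ r : R, r ≠ 0 ∧ IsFMr G j K C f r)) := by
  classical
  obtain ⟨hKG, hKcard, hCK, hCcard, hloc, -⟩ := hM
  have halt := hf.2
  have hvan := van_of_supp hf hsupp
  have dir2 : ∀ r : R, IsFMr G j K C f r → IsCocycle G (j + 1) f := by
    intro r hr
    refine ⟨hf, ?_⟩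
    intro σ hOS
    by_cases hfl : ∀ i : Fin (j + 2), Finset.image (σ ∘ i.succAbove) Finset.univ ∉ flower K C
    · unfold delta
      apply Finset.sum_eq_zero
      intro i _
      rw [hvan _ (hfl i), smul_zero]
    · push_neg at hfl
      obtain ⟨i, hi⟩ := hfl
      obtain ⟨u, huK, huC, hP⟩ := hi
      have hsub : insert u C ⊆ Finset.image σ Finset.univ := by
        rw [← hP]; exact image_comp_subset σ i
      have hτK : Finset.image σ Finset.univ ⊆ K := hloc _ hOS.2 ⟨u, huK, huC, hsub⟩
      have hCτ : C ⊆ Finset.image σ Finset.univ :=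
        fun x hx => hsub (Finset.mem_insert_of_mem hx)
      have hcard : (Finset.image σ Finset.univ).card = j + 2 := by
        rw [Finset.card_image_of_injective _ hOS.1, Finset.card_univ, Fintype.card_fin]
      have hsd : (Finset.image σ Finset.univ \ C).card = 2 := by
        rw [Finset.card_sdiff_of_subset hCτ, hcard, hCcard]
        omega
      obtain ⟨w1, w2, hw12, hsdeq⟩ := Finset.card_eq_two.1 hsd
      have hw1 : w1 ∈ Finset.image σ Finset.univ ∧ w1 ∉ C := by
        have h : w1 ∈ Finset.image σ Finset.univ \ C := by
          rw [hsdeq]; exact Finset.mem_insert_self _ _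
        exact Finset.mem_sdiff.1 h
      have hw2 : w2 ∈ Finset.image σ Finset.univ ∧ w2 ∉ C := by
        have h : w2 ∈ Finset.image σ Finset.univ \ C := by
          rw [hsdeq]; exact Finset.mem_insert_of_mem (Finset.mem_singleton_self _)
        exact Finset.mem_sdiff.1 h
      have hτeq : Finset.image σ Finset.univ = insert w2 (insert w1 C) := by
        have hu := Finset.sdiff_union_of_subset hCτ
        rw [hsdeq] at hu
        rw [← hu]
        ext x
        simp only [Finset.mem_union, Finset.mem_insert, Finset.mem_singleton]
        tauto
      have hinj2 := ord2_inj hCcard hw1.2 hw2.2 hw12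
      obtain ⟨π, hπ⟩ := exists_perm_comp σ (ord2 j C w1 w2) hOS.1 hinj2
        (by rw [ord2_image hCcard, hτeq])
      rw [hπ, delta_comp_perm f halt, delta_ord2 j K C w1 w2 hCcard hw1.2 hw2.2 hw12 f hvan,
        hr.2.2 w1 (hτK hw1.1) hw1.2, hr.2.2 w2 (hτK hw2.1) hw2.2, sign_sum_zero, smul_zero]
  have dir1 : IsCocycle G (j + 1) f → ∃ r : R, IsFMr G j K C f r := by
    intro hcoc
    have hKCne : (K \ C).Nonempty := by
      apply Finset.card_pos.1
      rw [Finset.card_sdiff_of_subset hCK, hKcard, hCcard]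
      omega
    obtain ⟨w₀, hw₀⟩ := hKCne
    rw [Finset.mem_sdiff] at hw₀
    refine ⟨f (canonOrd j C w₀), hf, hvan, ?_⟩
    intro w hwK hwC
    rcases eq_or_ne w w₀ with rfl | hne
    · rfl
    · have hOS : OrdSimp G (ord2 j C w₀ w) := by
        refine ⟨ord2_inj hCcard hw₀.2 hwC (Ne.symm hne), ?_⟩
        rw [ord2_image hCcard]
        refine hG.2.2 K hKG _ ?_ ⟨w, Finset.mem_insert_self _ _⟩
        intro x hx
        simp only [Finset.mem_insert] at hx
        rcases hx with rfl | rfl | hx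
        · exact hwK
        · exact hw₀.1
        · exact hCK hx
      have h0 := hcoc.2 _ hOS
      rw [delta_ord2 j K C w₀ w hCcard hw₀.2 hwC (Ne.symm hne) f hvan] at h0
      exact eq_of_sign_sum h0
  refine ⟨⟨dir1, fun h => h.elim fun r hr => dir2 r hr⟩, ?_⟩
  rintro ⟨w, a, hhat⟩
  obtain ⟨hM2, hwK, hwC, haK, hshell, -⟩ := hhat
  have haC : a ∉ C := fun h => haK (hCK h)
  have hwa : w ≠ a := fun h => haK (h ▸ hwK)
  constructor
  · rintro ⟨hcoc, hncob⟩
    obtain ⟨r, hr⟩ := dir1 hcoc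
    refine ⟨r, ?_, hr⟩
    intro hr0
    subst hr0
    apply hncob
    refine ⟨fun _ => 0, ⟨fun _ _ => rfl, fun _ _ _ _ => neg_zero.symm⟩, ?_⟩
    intro σ hOS
    have hz : delta (fun _ : Fin j → Fin N => (0 : R)) σ = 0 := by
      unfold delta; simp
    rw [hz]
    by_cases him : Finset.image σ Finset.univ ∈ flower K C
    · obtain ⟨u, huK, huC, hP⟩ := him
      obtain ⟨π, hπ⟩ := exists_perm_comp σ (canonOrd j C u) hOS.1 (canon_inj hCcard huC)
        (by rw [canon_image hCcard, hP])
      rw [hπ, alt_comp_perm f halt, hr.2.2 u huK huC, smul_zero]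
    · exact hvan σ him
  · rintro ⟨r, hrne, hr⟩
    refine ⟨dir2 r hr, ?_⟩
    rintro ⟨g, hg, hfg⟩
    have hinj : Function.Injective (ord2 j C w a) := ord2_inj hCcard hwC haC hwa
    have hfaces : ∀ i : Fin (j + 2), OrdSimp G (ord2 j C w a ∘ i.succAbove) := by
      intro i
      refine ⟨hinj.comp (Fin.succAbove_right_injective), ?_⟩
      apply hshell.2
      · rw [← ord2_image (w := w) (w' := a) hCcard]
        exact image_comp_subset _ i
      · rw [Finset.card_image_of_injective _ (hinj.comp (Fin.succAbove_right_injective)),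
          Finset.card_univ, Fintype.card_fin]
    have h1 : delta f (ord2 j C w a) = 0 := by
      have h2 : ∀ i : Fin (j + 2), f (ord2 j C w a ∘ i.succAbove)
          = delta g (ord2 j C w a ∘ i.succAbove) := fun i => hfg _ (hfaces i)
      have h3 : delta f (ord2 j C w a) = delta (delta g) (ord2 j C w a) := by
        show (∑ i : Fin (j + 2), (-1 : ℤ) ^ (i : ℕ) • f (ord2 j C w a ∘ i.succAbove))
            = ∑ i : Fin (j + 2), (-1 : ℤ) ^ (i : ℕ) • delta g (ord2 j C w a ∘ i.succAbove)
        exact Finset.sum_congr rfl fun i _ => by rw [h2 i]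
      rw [h3, delta_delta]
    rw [delta_ord2 j K C w a hCcard hwC haC hwa f hvan] at h1
    have hfa : f (canonOrd j C a) = 0 := by
      apply hvan
      rintro ⟨u, huK, huC, hP⟩
      rw [canon_image hCcard] at hP
      have ham : a ∈ insert u C := by rw [← hP]; exact Finset.mem_insert_self _ _
      rcases Finset.mem_insert.1 ham with rfl | h
      · exact haK huK
      · exact haC h
    rw [hfa, smul_zero, zero_add, hr.2.2 w hwK hwC] at h1
    exact hrne (zero_of_sign_smul h1)



end RSC
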